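/- If q = (q_k) is a sequence with q_k > 1 and ∑_{k≥1} 1/q_k < ∞, then for every real p the weighted ℓ²-type embedding L^{p+1}_{2,q} ⊂ L^p_{2,q} is Hilbert–Schmidt; equivalently, ∑_{α ∈ J} q^{−2α} < ∞ where q^{−2α} = ∏_k q_k^{−2α_k}. -/

import Mathlib

open scoped BigOperators

noncomputable section

abbrev MultiIndex := ℕ →₀ ℕ

/-- `r^α = ∏ₖ r_k^{α_k}` -/
def mpow (r : ℕ → ℝ) (α : MultiIndex) : ℝ := ∏ k ∈ α.support, r k ^ α k

/-- `α! = ∏ₖ α_k!` -/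
def mfact (α : MultiIndex) : ℕ := ∏ k ∈ α.support, (α k).factorial

/-- generalized binomial coefficient `C(α,β) = ∏ₖ C(α_k, β_k)` -/
def mchoose (α β : MultiIndex) : ℕ :=
  ∏ k ∈ α.support ∪ β.support, Nat.choose (α k) (β k)

/-- `|α| = ∑ₖ α_k` -/
def mdeg (α : MultiIndex) : ℕ := ∑ k ∈ α.support, α k

set_option maxHeartbeats 1000000

lemma mpow_eq_prod (r : ℕ → ℝ) (α : MultiIndex) :
    mpow r α = α.prod fun k n => r k ^ n := rfl

lemma mpow_add (r : ℕ → ℝ) (α β : MultiIndex) :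
    mpow r (α + β) = mpow r α * mpow r β := by
  simp only [mpow_eq_prod]
  exact Finsupp.prod_add_index' (fun k => pow_zero _) (fun k m n => pow_add _ _ _)

lemma mpow_single (r : ℕ → ℝ) (a n : ℕ) :
    mpow r (Finsupp.single a n) = r a ^ n := by
  simp only [mpow_eq_prod]
  exact Finsupp.prod_single_index (pow_zero _)

lemma mpow_nonneg {r : ℕ → ℝ} (hr : ∀ k, 0 ≤ r k) (α : MultiIndex) : 0 ≤ mpow r α :=
  Finset.prod_nonneg fun k _ => pow_nonneg (hr k) _

def extEquiv (a : ℕ) (F : Finset ℕ) (ha : a ∉ F) :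
    ℕ × {α : MultiIndex // α.support ⊆ F} ≃ {α : MultiIndex // α.support ⊆ insert a F} where
  toFun p := ⟨(p.2 : MultiIndex) + Finsupp.single a p.1, by
    intro k hk
    rcases Finset.mem_union.mp (Finsupp.support_add hk) with h | h
    · exact Finset.mem_insert_of_mem (p.2.2 h)
    · have h2 : k = a := by
        have := Finsupp.support_single_subset h
        simpa using this
      rw [h2]; exact Finset.mem_insert_self a _⟩
  invFun β := ((β : MultiIndex) a, ⟨(β : MultiIndex).erase a, by
    intro k hk
    rw [Finsupp.support_erase, Finset.mem_erase] at hk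
    rcases Finset.mem_insert.mp (β.2 hk.2) with h | h
    · exact absurd h hk.1
    · exact h⟩)
  left_inv := by
    rintro ⟨n, α, hα⟩
    have haα : (α : MultiIndex) a = 0 :=
      Finsupp.notMem_support_iff.mp fun h => ha (hα h)
    refine Prod.ext ?_ ?_
    · show (α + Finsupp.single a n) a = n
      simp [haα]
    · refine Subtype.ext ?_
      show (α + Finsupp.single a n).erase a = α
      ext k
      rw [Finsupp.erase_apply]
      split_ifs with h
      · rw [h, haα]
      · simp [Finsupp.single_apply, Ne.symm h]
  right_inv := by
    rintro ⟨β, hβ⟩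
    refine Subtype.ext ?_
    show β.erase a + Finsupp.single a (β a) = β
    exact Finsupp.erase_add_single a β

lemma key (r : ℕ → ℝ) (hr0 : ∀ k, 0 ≤ r k) (hr1 : ∀ k, r k < 1) (F : Finset ℕ) :
    HasSum (fun α : {α : MultiIndex // α.support ⊆ F} => mpow r (α : MultiIndex))
      (∏ k ∈ F, (1 - r k)⁻¹) := by
  classical
  induction F using Finset.induction_on with
  | empty =>
    have huniq : ∀ α : {α : MultiIndex // α.support ⊆ (∅ : Finset ℕ)},
        α = ⟨0, by simp⟩ := by
      rintro ⟨α, hα⟩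
      refine Subtype.ext ?_
      ext k
      simpa using fun h => hα (Finsupp.mem_support_iff.mpr h)
    rw [Finset.prod_empty]
    have := hasSum_single (f := fun α : {α : MultiIndex // α.support ⊆ (∅ : Finset ℕ)} =>
      mpow r (α : MultiIndex)) ⟨0, by simp⟩ (fun b hb => absurd (huniq b) hb)
    simpa [mpow] using this
  | @insert a F ha ih =>
    rw [Finset.prod_insert ha, ← Equiv.hasSum_iff (extEquiv a F ha)]
    have hgeo : HasSum (fun n : ℕ => r a ^ n) (1 - r a)⁻¹ :=
      hasSum_geometric_of_lt_one (hr0 a) (hr1 a)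
    have hmul := hgeo.mul ih
      (hgeo.summable.mul_of_nonneg ih.summable (fun n => pow_nonneg (hr0 a) n)
        (fun α => mpow_nonneg hr0 _))
    refine hmul.congr_fun fun p => ?_
    show mpow r ((p.2 : MultiIndex) + Finsupp.single a p.1) = _
    rw [mpow_add, mpow_single, mul_comm]

/-- `∑_α q^{-2α} = ∏ₖ (1-q_k^{-2})^{-1} < ∞` when `q_k > 1` and
`∑ₖ 1/q_k < ∞`; equivalently the embedding `L^{p+1}_{2,q} ⊂ L^p_{2,q}` is
Hilbert-Schmidt. -/
theorem stmt19 (q : ℕ → ℝ) (hq : ∀ k, 1 < q k) (hs : Summable fun k => 1 / q k) :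
    Summable (fun α : MultiIndex => mpow (fun k => ((q k) ^ 2)⁻¹) α) ∧
    ∑' α : MultiIndex, mpow (fun k => ((q k) ^ 2)⁻¹) α
      = ∏' k, (1 - ((q k) ^ 2)⁻¹)⁻¹ := by
  classical
  set r : ℕ → ℝ := fun k => ((q k) ^ 2)⁻¹ with hr
  have hq0 : ∀ k, 0 < q k := fun k => lt_trans one_pos (hq k)
  have hr0 : ∀ k, 0 < r k := fun k => inv_pos.mpr (pow_pos (hq0 k) 2)
  have hr1 : ∀ k, r k < 1 := fun k =>
    inv_lt_one_of_one_lt₀ (one_lt_pow₀ (hq k) (by norm_num))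
  have h1r : ∀ k, 0 < 1 - r k := fun k => sub_pos.mpr (hr1 k)
  have hrs : Summable r := by
    refine hs.of_nonneg_of_le (fun k => (hr0 k).le) (fun k => ?_)
    rw [one_div]
    show ((q k) ^ 2)⁻¹ ≤ (q k)⁻¹
    rw [sq]
    refine inv_anti₀ (hq0 k) ?_
    nlinarith [hq k, hq0 k]
  have hlog : Summable fun k => Real.log ((1 - r k)⁻¹) := by
    have hO : (fun x : ℝ => Real.log (1 - x)) =O[nhds 0] id := by
      have hg : DifferentiableAt ℝ (fun x : ℝ => Real.log (1 - x)) 0 := by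
        have h1 : (1 : ℝ) - 0 ≠ 0 := by norm_num
        fun_prop (disch := norm_num)
      exact (by simpa using hg.isBigO_sub :
        (fun x : ℝ => Real.log (1 - x)) =O[nhds 0] fun x => x)
    have h2 := hO.comp_summable hrs
    refine h2.neg.congr fun k => ?_
    show -Real.log (1 - r k) = Real.log ((1 - r k)⁻¹)
    rw [Real.log_inv]
  have hP : HasProd (fun k => (1 - r k)⁻¹) (∏' k, (1 - r k)⁻¹) :=
    (Real.multipliable_of_summable_log (fun k => inv_pos.mpr (h1r k)) hlog).hasProd
  have hone_le : ∀ k, 1 ≤ (1 - r k)⁻¹ := fun k =>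
    (one_le_inv₀ (h1r k)).mpr (by linarith [(hr0 k).le])
  have hmono : ∀ F G : Finset ℕ, F ⊆ G →
      ∏ k ∈ F, (1 - r k)⁻¹ ≤ ∏ k ∈ G, (1 - r k)⁻¹ := by
    intro F G hFG
    rw [← Finset.prod_sdiff hFG]
    refine le_mul_of_one_le_left (Finset.prod_nonneg fun k _ => (inv_pos.mpr (h1r k)).le) ?_
    calc (1 : ℝ) = ∏ _k ∈ G \ F, (1 : ℝ) := by rw [Finset.prod_const_one]
      _ ≤ ∏ k ∈ G \ F, (1 - r k)⁻¹ :=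
        Finset.prod_le_prod (fun k _ => zero_le_one) (fun k _ => hone_le k)
  have hfin_le : ∀ F : Finset ℕ, ∏ k ∈ F, (1 - r k)⁻¹ ≤ ∏' k, (1 - r k)⁻¹ := by
    intro F
    exact ge_of_tendsto hP (Filter.eventually_atTop.mpr ⟨F, fun G hG => hmono F G hG⟩)
  have hbound : ∀ u : Finset MultiIndex,
      ∑ α ∈ u, mpow r α ≤ ∏' k, (1 - r k)⁻¹ := by
    intro u
    set F : Finset ℕ := u.sup Finsupp.support with hF
    have hsub : ∀ α ∈ u, α.support ⊆ F := fun α hα => Finset.le_sup hα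
    have hkey := key r (fun k => (hr0 k).le) hr1 F
    have h1 : ∑ α ∈ u, mpow r α ≤ ∏ k ∈ F, (1 - r k)⁻¹ := by
      have heq : ∑ α ∈ u, mpow r α
          = ∑ β ∈ u.subtype (fun α : MultiIndex => α.support ⊆ F),
              mpow r (β : MultiIndex) := by
        rw [Finset.sum_subtype_eq_sum_filter, Finset.filter_true_of_mem hsub]
      rw [heq]
      exact sum_le_hasSum _ (fun β _ => mpow_nonneg (fun k => (hr0 k).le) _) hkey
    exact h1.trans (hfin_le F)
  have hsummable : Summable (fun α : MultiIndex => mpow r α) :=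
    summable_of_sum_le (fun α => mpow_nonneg (fun k => (hr0 k).le) _) hbound
  refine ⟨hsummable, le_antisymm ?_ ?_⟩
  · exact Summable.tsum_le_of_sum_le hsummable hbound
  · refine le_of_tendsto' hP fun F => ?_
    have hkey := key r (fun k => (hr0 k).le) hr1 F
    rw [← hkey.tsum_eq]
    exact Summable.tsum_le_tsum_of_inj (Subtype.val) Subtype.val_injective
      (fun α _ => mpow_nonneg (fun k => (hr0 k).le) _)
      (fun β => le_refl _) hkey.summable hsummable
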